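/- Let n ≥ 3, let G = ⟨α, τ : α^n = τ^2 = 1, τα = α^{-1}τ⟩ be the dihedral group of order 2n, and let S be a sequence over G with S ∉ F(⟨α⟩). Write S_{⟨α⟩} = α^{x_1} ⋯ α^{x_s} with x_1, …, x_s ∈ ℤ/nℤ. Then S is a product-one sequence if and only if |S_{τ⟨α⟩}| = 2ℓ is even and 0 ∈ {x_1, −x_1} + ⋯ + {x_s, −x_s} + Σ_ℓ(2 S^+_{τ⟨α⟩}) − σ(S^+_{τ⟨α⟩}) in ℤ/nℤ. -/

import Mathlib

namespace ProductOne

open scoped Classical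

variable {G : Type*} [Group G]

/-- `S` is a product-one sequence over `G`: its terms can be ordered with product `1`. -/
def IsProductOne (S : Multiset G) : Prop :=
  ∃ l : List G, (l : Multiset G) = S ∧ l.prod = 1

/-- `S` is an atom (a minimal product-one sequence): it is a nontrivial product-one
sequence that is not the concatenation of two nontrivial product-one sequences. -/
def IsAtomSeq (S : Multiset G) : Prop :=
  S ≠ 0 ∧ IsProductOne S ∧
    ∀ A B : Multiset G, S = A + B → IsProductOne A → IsProductOne B → A = 0 ∨ B = 0

/-- `S` is a sequence over the subset `G₀ ⊆ G`. -/
def SeqOn (G₀ : Set G) (S : Multiset G) : Prop := ∀ g ∈ S, g ∈ G₀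

/-- `S` is an atom of the monoid `B(G₀)` of product-one sequences over `G₀`. -/
def IsAtomSeqOn (G₀ : Set G) (S : Multiset G) : Prop := SeqOn G₀ S ∧ IsAtomSeq S

/-- The set of lengths `L(A)` of factorizations of `A` into atoms over `G₀`. -/
def lengthsOn (G₀ : Set G) (A : Multiset G) : Set ℕ :=
  {k | ∃ f : Multiset (Multiset G), Multiset.card f = k ∧
        (∀ U ∈ f, IsAtomSeqOn G₀ U) ∧ f.sum = A}

/-- The set of lengths `L(A)` over the whole group. -/
def lengths (A : Multiset G) : Set ℕ := lengthsOn Set.univ A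

/-- The set of distances of a set `L ⊆ ℕ`. -/
def distancesOf (L : Set ℕ) : Set ℕ :=
  {d | 0 < d ∧ ∃ a, a ∈ L ∧ a + d ∈ L ∧ ∀ b ∈ L, ¬(a < b ∧ b < a + d)}

/-- The set of distances `Δ(G₀)` of the monoid `B(G₀)`. -/
def DeltaOn (G₀ : Set G) : Set ℕ :=
  {d | ∃ A : Multiset G, SeqOn G₀ A ∧ IsProductOne A ∧ d ∈ distancesOf (lengthsOn G₀ A)}

/-- The set of distances `Δ(G)` of `B(G)`. -/
def Delta (G : Type*) [Group G] : Set ℕ := DeltaOn (Set.univ : Set G)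

/-- The large Davenport constant of `G₀`: maximal length of an atom of `B(G₀)`. -/
noncomputable def DavenportOn (G₀ : Set G) : ℕ :=
  sSup {k | ∃ S : Multiset G, IsAtomSeqOn G₀ S ∧ Multiset.card S = k}

/-- The large Davenport constant `D(G)`. -/
noncomputable def Davenport (G : Type*) [Group G] : ℕ :=
  DavenportOn (Set.univ : Set G)

/-- The small Davenport constant `d(G₀)`: maximal length of a product-one free
sequence over `G₀`. -/
noncomputable def smallDavenportOn (G₀ : Set G) : ℕ :=
  sSup {k | ∃ S : Multiset G, SeqOn G₀ S ∧ Multiset.card S = k ∧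
        ∀ T : Multiset G, T ≤ S → T ≠ 0 → ¬IsProductOne T}

/-- `Δ*(G) = {min Δ(G₀) : G₀ ⊆ G with Δ(G₀) ≠ ∅}`. -/
def DeltaStar (G : Type*) [Group G] : Set ℕ :=
  {d | ∃ G₀ : Set G, (DeltaOn G₀).Nonempty ∧ d = sInf (DeltaOn G₀)}

/-- The elasticity `ρ(L) = max L / min L` of a set of lengths (with the set of
positive elements used, and `ρ = 1` if there are none). -/
noncomputable def elasticity (L : Set ℕ) : ℚ :=
  if (L ∩ {k | 0 < k}).Nonempty then
    ((sSup (L ∩ {k | 0 < k}) : ℕ) : ℚ) / ((sInf (L ∩ {k | 0 < k}) : ℕ) : ℚ)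
  else 1

/-- The elasticity `ρ(G₀)` of the monoid `B(G₀)`. -/
noncomputable def rhoOn (G₀ : Set G) : ℝ :=
  sSup {x : ℝ | ∃ A : Multiset G, SeqOn G₀ A ∧ IsProductOne A ∧
    x = (elasticity (lengthsOn G₀ A) : ℝ)}

/-- `Δ*_ρ(G) = {min Δ(G₀) : G₀ ⊆ G with ρ(G₀) = D(G)/2}`. -/
noncomputable def DeltaRhoStar (G : Type*) [Group G] : Set ℕ :=
  {d | ∃ G₀ : Set G, rhoOn G₀ = (Davenport G : ℝ) / 2 ∧ d = sInf (DeltaOn G₀)}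

/-- Divisibility in the monoid `B(G)`. -/
def BDvd (A S : Multiset G) : Prop :=
  ∃ C : Multiset G, IsProductOne C ∧ S = A + C

/-- The `ω`-invariant `ω(B(G), A)`. -/
noncomputable def omegaAt (A : Multiset G) : ℕ∞ :=
  sInf {N : ℕ∞ | ∀ f : Multiset (Multiset G),
    (∀ B ∈ f, IsProductOne B) → BDvd A f.sum →
    ∃ t ≤ f, (Multiset.card t : ℕ∞) ≤ N ∧ BDvd A t.sum}

/-- `ω(G) = sup {ω(B(G), U) : U an atom of B(G)}`. -/
noncomputable def omegaInv (G : Type*) [Group G] : ℕ∞ :=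
  ⨆ U ∈ {U : Multiset G | IsAtomSeq U}, omegaAt U

/-- `z` is a factorization of `A` into atoms. -/
def IsFactorization (A : Multiset G) (z : Multiset (Multiset G)) : Prop :=
  (∀ U ∈ z, IsAtomSeq U) ∧ z.sum = A

/-- The distance between two factorizations. -/
noncomputable def factDist (z z' : Multiset (Multiset G)) : ℕ :=
  letI := Classical.decEq (Multiset G)
  max (Multiset.card (z - z')) (Multiset.card (z' - z))

/-- The catenary degree `c(A)`. -/
noncomputable def catenaryAt (A : Multiset G) : ℕ∞ :=
  sInf {N : ℕ∞ | ∀ z z' : Multiset (Multiset G),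
    IsFactorization A z → IsFactorization A z' →
    Relation.ReflTransGen
      (fun x y => IsFactorization A y ∧ (factDist x y : ℕ∞) ≤ N) z z'}

/-- The set of positive catenary degrees `Ca(G)`. -/
noncomputable def CatenarySet (G : Type*) [Group G] : Set ℕ∞ :=
  {c | ∃ A : Multiset G, IsProductOne A ∧ catenaryAt A = c ∧ 0 < c}

/-- The catenary degree `c(G)` of `B(G)`. -/
noncomputable def catenaryDegree (G : Type*) [Group G] : ℕ∞ :=
  ⨆ A ∈ {A : Multiset G | IsProductOne A}, catenaryAt A

/-- The cross number `k(S)` of a sequence. -/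
noncomputable def crossNumber (S : Multiset G) : ℚ :=
  (S.map fun g => (1 : ℚ) / (orderOf g : ℚ)).sum

/-- The system of sets of lengths `L(G)`. -/
def LSystem (G : Type*) [Group G] : Set (Set ℕ) :=
  {L | ∃ A : Multiset G, IsProductOne A ∧ L = lengths A}

/-- The set of products `π(S)` of all orderings of the terms of `S`. -/
def piSet (S : Multiset G) : Set G :=
  {g | ∃ l : List G, (l : Multiset G) = S ∧ l.prod = g}

/-- The sumset `{x₁, -x₁} + ⋯ + {x_s, -x_s}` for a sequence `a = x₁ ⋯ x_s`. -/
def signedSums {α : Type*} [AddCommGroup α] (a : Multiset α) : Set α :=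
  {z | ∃ t ≤ a, z = t.sum + t.sum - a.sum}

/-- `Σ_k(T)`: the set of sums of `k`-term subsequences of `T`. -/
def subseqSums {α : Type*} [AddCommMonoid α] (k : ℕ) (T : Multiset α) : Set α :=
  {z | ∃ t ≤ T, Multiset.card t = k ∧ t.sum = z}

/-- The subsequence `S_X` of all terms of `S` lying in `X`. -/
noncomputable def restrictTo (X : Set G) (S : Multiset G) : Multiset G :=
  letI := Classical.decPred fun g => g ∈ X
  S.filter fun g => g ∈ X

/-- The maximum multiplicity `h(S)` of a term of `S`. -/
noncomputable def maxMultiplicity {α : Type*} (S : Multiset α) : ℕ :=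
  letI := Classical.decEq α
  S.toFinset.sup S.count

end ProductOne

namespace StmtAux

open DihedralGroup


/-- Pull back a sub-multiset along a map. -/
lemma exists_of_le_map {α β : Type*} {f : α → β} :
    ∀ {s : Multiset α} {v : Multiset β}, v ≤ s.map f → ∃ u ≤ s, u.map f = v := by
  intro s
  induction s using Multiset.induction with
  | empty => intro v hv; simp at hv; exact ⟨0, le_refl 0, by simp [hv]⟩
  | cons x s ih =>
    intro v hv
    rw [Multiset.map_cons] at hv
    by_cases hx : f x ∈ v
    · obtain ⟨v', rfl⟩ := Multiset.exists_cons_of_mem hx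
      have hv' : v' ≤ s.map f := by
        have := Multiset.cons_le_cons_iff (f x) |>.mp hv
        exact this
      obtain ⟨u, hu, huv⟩ := ih hv'
      exact ⟨x ::ₘ u, Multiset.cons_le_cons x hu, by simp [huv]⟩
    · have hv' : v ≤ s.map f := by
        have := (Multiset.le_cons_of_notMem hx).mp hv
        exact this
      obtain ⟨u, hu, huv⟩ := ih hv'
      exact ⟨u, le_trans hu (Multiset.le_cons_self s x), huv⟩

lemma prod_map_r {n : ℕ} (L : List (ZMod n)) : (L.map DihedralGroup.r).prod = r L.sum := by
  induction L with
  | nil => simp [one_def, -r_zero]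
  | cons x L ih => simp [ih, r_mul_r]


open DihedralGroup


lemma prodForm {n : ℕ} :
    ∀ l : List (DihedralGroup n), ∀ a b : Multiset (ZMod n),
    (l : Multiset (DihedralGroup n)) = a.map DihedralGroup.r + b.map DihedralGroup.sr →
    (∃ t ≤ a, ∃ u ≤ b, 2 * Multiset.card u = Multiset.card b ∧
        l.prod = DihedralGroup.r (2 * t.sum - a.sum + (2 * u.sum - b.sum))) ∨
    (∃ t ≤ a, ∃ u ≤ b, 2 * Multiset.card u = Multiset.card b + 1 ∧
        l.prod = DihedralGroup.sr (2 * t.sum - a.sum + (2 * u.sum - b.sum))) := by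
  intro l
  induction l with
  | nil =>
    intro a b h
    have h0 : a.map DihedralGroup.r + b.map DihedralGroup.sr = 0 := by
      rw [← h]; simp
    rw [add_eq_zero, Multiset.map_eq_zero, Multiset.map_eq_zero] at h0
    obtain ⟨rfl, rfl⟩ := h0
    left
    exact ⟨0, le_refl _, 0, le_refl _, by simp, by simp [one_def, -r_zero]⟩
  | cons c l ih =>
    intro a b h
    have hmem : c ∈ a.map DihedralGroup.r + b.map DihedralGroup.sr := by
      rw [← h]; simp
    match c with
    | DihedralGroup.r x =>
      have hx : x ∈ a := by
        rcases Multiset.mem_add.mp hmem with h1 | h1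
        · obtain ⟨y, hy, hyx⟩ := Multiset.mem_map.mp h1
          rwa [show y = x from by injection hyx] at hy
        · obtain ⟨y, hy, hyx⟩ := Multiset.mem_map.mp h1
          exact absurd hyx (by simp)
      set a' := a.erase x with ha'
      have hae : a = x ::ₘ a' := (Multiset.cons_erase hx).symm
      have hl : (l : Multiset (DihedralGroup n)) = a'.map DihedralGroup.r + b.map DihedralGroup.sr := by
        have : (DihedralGroup.r x ::ₘ (l : Multiset (DihedralGroup n)))
            = DihedralGroup.r x ::ₘ (a'.map DihedralGroup.r + b.map DihedralGroup.sr) := by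
          rw [Multiset.cons_coe, h, hae]; simp [Multiset.cons_add]
        exact (Multiset.cons_inj_right _).mp this
      rcases ih a' b hl with ⟨t', ht', u, hu, hcard, hprod⟩ | ⟨t', ht', u, hu, hcard, hprod⟩
      · left
        refine ⟨x ::ₘ t', by rw [hae]; exact Multiset.cons_le_cons x ht', u, hu, hcard, ?_⟩
        rw [List.prod_cons, hprod, r_mul_r, hae]
        congr 1
        simp only [Multiset.sum_cons]
        ring
      · right
        refine ⟨t', le_trans ht' (Multiset.erase_le x a), u, hu, hcard, ?_⟩
        rw [List.prod_cons, hprod, r_mul_sr, hae]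
        congr 1
        simp only [Multiset.sum_cons]
        ring
    | DihedralGroup.sr y =>
      have hy : y ∈ b := by
        rcases Multiset.mem_add.mp hmem with h1 | h1
        · obtain ⟨z, hz, hzy⟩ := Multiset.mem_map.mp h1
          exact absurd hzy (by simp)
        · obtain ⟨z, hz, hzy⟩ := Multiset.mem_map.mp h1
          rwa [show z = y from by injection hzy] at hz
      set b' := b.erase y with hb'
      have hbe : b = y ::ₘ b' := (Multiset.cons_erase hy).symm
      have hl : (l : Multiset (DihedralGroup n)) = a.map DihedralGroup.r + b'.map DihedralGroup.sr := by
        have : (DihedralGroup.sr y ::ₘ (l : Multiset (DihedralGroup n)))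
            = DihedralGroup.sr y ::ₘ (a.map DihedralGroup.r + b'.map DihedralGroup.sr) := by
          rw [Multiset.cons_coe, h, hbe]
          simp [Multiset.map_cons]
        exact (Multiset.cons_inj_right _).mp this
      have hcardb : Multiset.card b = Multiset.card b' + 1 := by
        rw [hbe]; simp
      rcases ih a b' hl with ⟨t, ht, u', hu', hcard, hprod⟩ | ⟨t, ht, u', hu', hcard, hprod⟩
      · right
        refine ⟨t, ht, y ::ₘ u', by rw [hbe]; exact Multiset.cons_le_cons y hu', ?_, ?_⟩
        · simp only [Multiset.card_cons, hcardb]; omega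
        · rw [List.prod_cons, hprod, sr_mul_r]
          congr 1
          rw [hbe]
          simp only [Multiset.sum_cons]
          ring
      · left
        refine ⟨t, ht, u', le_trans hu' (Multiset.erase_le y b), by omega, ?_⟩
        rw [List.prod_cons, hprod, sr_mul_sr]
        congr 1
        rw [hbe]
        simp only [Multiset.sum_cons]
        ring


open DihedralGroup


/-- Interleave two lists as `sr`-terms: `[sr w₁, sr u₁, sr w₂, sr u₂, …]`. -/
def inter {n : ℕ} : List (ZMod n) → List (ZMod n) → List (DihedralGroup n)
  | w :: W, u :: U => DihedralGroup.sr w :: DihedralGroup.sr u :: inter W U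
  | _, _ => []

lemma inter_coe {n : ℕ} :
    ∀ W U : List (ZMod n), W.length = U.length →
      ((inter W U : List (DihedralGroup n)) : Multiset (DihedralGroup n))
        = (W : Multiset (ZMod n)).map DihedralGroup.sr
          + (U : Multiset (ZMod n)).map DihedralGroup.sr
  | [], [], _ => by simp [inter]
  | w :: W, u :: U, h => by
    have h' : W.length = U.length := by simpa using h
    have := inter_coe W U h'
    simp only [inter, ← Multiset.cons_coe, Multiset.map_cons, this]
    rw [Multiset.cons_add, Multiset.add_cons]

lemma inter_prod {n : ℕ} :
    ∀ W U : List (ZMod n), W.length = U.length →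
      (inter W U).prod = DihedralGroup.r (U.sum - W.sum)
  | [], [], _ => by simp [inter, one_def, -r_zero]
  | w :: W, u :: U, h => by
    have h' : W.length = U.length := by simpa using h
    rw [inter, List.prod_cons, List.prod_cons, inter_prod W U h', sr_mul_r, sr_mul_sr,
      List.sum_cons, List.sum_cons]
    congr 1
    ring

end StmtAux

open DihedralGroup
namespace StmtAux

lemma sum_map_two {n : ℕ} (u : Multiset (ZMod n)) :
    (u.map fun v => 2 * v).sum = 2 * u.sum := by
  induction u using Multiset.induction with
  | empty => simp
  | cons x u ih => simp [ih, mul_add]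

end StmtAux

open StmtAux in
theorem isProductOne_dihedral_iff' (n : ℕ) (hn : 3 ≤ n) (a b : Multiset (ZMod n))
    (hb : b ≠ 0) :
    (∃ l : List (DihedralGroup n),
        (l : Multiset (DihedralGroup n)) = a.map DihedralGroup.r + b.map DihedralGroup.sr
          ∧ l.prod = 1) ↔
      ∃ ℓ : ℕ, Multiset.card b = 2 * ℓ ∧
        (0 : ZMod n) ∈ {z : ZMod n | ∃ x ∈ {z | ∃ t ≤ a, z = t.sum + t.sum - a.sum},
          ∃ y ∈ {z | ∃ t ≤ b.map fun v => 2 * v, Multiset.card t = ℓ ∧ t.sum = z},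
            z = x + y - b.sum} := by
  constructor
  · rintro ⟨l, hl, hprod⟩
    rcases prodForm l a b hl with ⟨t, ht, u, hu, hcard, hform⟩ | ⟨t, ht, u, hu, hcard, hform⟩
    · refine ⟨Multiset.card u, hcard.symm, ?_⟩
      have hE : 2 * t.sum - a.sum + (2 * u.sum - b.sum) = 0 := by
        rw [hform, one_def] at hprod
        injection hprod
      refine ⟨t.sum + t.sum - a.sum, ⟨t, ht, rfl⟩,
        2 * u.sum, ⟨u.map fun v => 2 * v, Multiset.map_le_map hu, by simp, sum_map_two u⟩, ?_⟩
      linear_combination -hE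
    · exfalso
      rw [hform, one_def] at hprod
      simp [-r_zero] at hprod
  · rintro ⟨ℓ, hcard, z, ⟨t, ht, rfl⟩, y, ⟨v, hv, hvcard, rfl⟩, hz⟩
    obtain ⟨u, hu, rfl⟩ := exists_of_le_map hv
    have hucard : Multiset.card u = ℓ := by simpa using hvcard
    have husum : (u.map fun v => 2 * v).sum = 2 * u.sum := sum_map_two u
    -- ℓ ≥ 1
    have hbpos : 0 < Multiset.card b := Multiset.card_pos.mpr hb
    have hl1 : 1 ≤ ℓ := by omega
    set w := b - u with hw
    have hwu : u + w = b := by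
      rw [hw, add_comm]; exact tsub_add_cancel_of_le hu
    have hwcard : Multiset.card w = ℓ := by
      have := congrArg Multiset.card hwu
      simp at this; omega
    have hune : u ≠ 0 := by
      intro h0; rw [h0] at hucard; simp at hucard; omega
    obtain ⟨u₀, u', rfl⟩ : ∃ u₀ u', u = u₀ ::ₘ u' := by
      rcases Multiset.exists_mem_of_ne_zero hune with ⟨u₀, hu₀⟩
      exact ⟨u₀, u.erase u₀, (Multiset.cons_erase hu₀).symm⟩
    have hwne : w ≠ 0 := by
      intro h0; rw [h0] at hwcard; simp at hwcard; omega
    obtain ⟨w₀, w', hwe⟩ : ∃ w₀ w', w = w₀ ::ₘ w' := by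
      rcases Multiset.exists_mem_of_ne_zero hwne with ⟨w₀, hw₀⟩
      exact ⟨w₀, w.erase w₀, (Multiset.cons_erase hw₀).symm⟩
    have hlen : w'.toList.length = u'.toList.length := by
      have hc := congrArg Multiset.card hwe
      simp [hwcard] at hc
      have hc2 : Multiset.card u' + 1 = ℓ := by simpa using hucard
      simp [Multiset.length_toList]; omega
    refine ⟨t.toList.map DihedralGroup.r ++ [DihedralGroup.sr w₀]
        ++ (a - t).toList.map DihedralGroup.r ++ [DihedralGroup.sr u₀]
        ++ inter w'.toList u'.toList, ?_, ?_⟩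
    · have hcoe := inter_coe w'.toList u'.toList hlen
      have h1 : t + (a - t) = a := by rw [add_comm]; exact tsub_add_cancel_of_le ht
      have hat : Multiset.map DihedralGroup.r a
          = Multiset.map DihedralGroup.r t + Multiset.map DihedralGroup.r (a - t) := by
        rw [← Multiset.map_add, h1]
      have hbt : Multiset.map DihedralGroup.sr b
          = ({DihedralGroup.sr u₀} + Multiset.map DihedralGroup.sr u')
            + ({DihedralGroup.sr w₀} + Multiset.map DihedralGroup.sr w') := by
        rw [← hwu, hwe, Multiset.map_add, Multiset.map_cons, Multiset.map_cons,
          ← Multiset.singleton_add, ← Multiset.singleton_add]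
      simp only [← Multiset.coe_add, ← Multiset.map_coe, Multiset.coe_toList,
        Multiset.coe_singleton, hcoe]
      rw [hat, hbt]
      abel
    · rw [List.prod_append, List.prod_append, List.prod_append, List.prod_append,
        prod_map_r, prod_map_r, inter_prod w'.toList u'.toList hlen,
        List.prod_cons, List.prod_nil, List.prod_cons, List.prod_nil]
      simp only [mul_one, r_mul_sr, sr_mul_r, sr_mul_sr, r_mul_r, Multiset.sum_toList]
      rw [one_def]
      congr 1
      have hat : t.sum + (a - t).sum = a.sum := by
        rw [← Multiset.sum_add, add_comm t, tsub_add_cancel_of_le ht]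
      have hbt : (u₀ + u'.sum) + (w₀ + w'.sum) = b.sum := by
        rw [← hwu, hwe]; simp [Multiset.sum_cons]; ring
      have hz' := hz
      rw [husum, Multiset.sum_cons] at hz'
      linear_combination -hz' - hat - hbt


open ProductOne DihedralGroup in
/-- For a sequence `S` over the dihedral group `D_{2n}` (`n ≥ 3`) not
consisting solely of terms from `⟨α⟩` (encoded by multisets `a`, `b` with `b ≠ 0` as in
Statement 14), `S` is a product-one sequence iff `|S_{τ⟨α⟩}| = 2ℓ` is even and
`0 ∈ {x₁,-x₁} + ⋯ + {x_s,-x_s} + Σ_ℓ(2 S⁺_{τ⟨α⟩}) - σ(S⁺_{τ⟨α⟩})`. -/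
theorem isProductOne_dihedral_iff (n : ℕ) (hn : 3 ≤ n) (a b : Multiset (ZMod n))
    (hb : b ≠ 0) :
    IsProductOne (a.map DihedralGroup.r + b.map DihedralGroup.sr) ↔
      ∃ ℓ : ℕ, Multiset.card b = 2 * ℓ ∧
        (0 : ZMod n) ∈ {z : ZMod n | ∃ x ∈ signedSums a,
          ∃ y ∈ subseqSums ℓ (b.map fun v => 2 * v), z = x + y - b.sum} := by
  exact isProductOne_dihedral_iff' n hn a b hb
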